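/- For the group SL(2,ℤ) acting on the free module ℤ[SL(2,ℤ)] generated by a single element f₀, the quotient by the left ideal generated by ([0,-1;1,1] - [1,-1;0,1] + 1)·f₀ and (1 + [0,1;-1,0])·f₀ is a nonzero cyclic SL(2,ℤ)-module. -/

import Mathlib

/-!
STATEMENT 13: For the group SL(2,ℤ) acting on the free module ℤ[SL(2,ℤ)]
generated by a single element f₀, the quotient by the left ideal generated by
([0,-1;1,1] - [1,-1;0,1] + 1)·f₀ and (1 + [0,1;-1,0])·f₀ is a nonzero cyclic
SL(2,ℤ)-module.

Formalization: ℤ[SL(2,ℤ)] = MonoidAlgebra ℤ SL(2,ℤ) as a module over itself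
(free of rank 1 on f₀ = 1); the quotient by the left ideal (submodule) spanned
by the two relation elements is nontrivial and generated by the class of f₀.
-/

abbrev SL2Z := Matrix.SpecialLinearGroup (Fin 2) ℤ

def slA : SL2Z := ⟨!![0, -1; 1, 1], by simp [Matrix.det_fin_two_of]⟩
def slB : SL2Z := ⟨!![1, -1; 0, 1], by simp [Matrix.det_fin_two_of]⟩
def slC : SL2Z := ⟨!![0, 1; -1, 0], by simp [Matrix.det_fin_two_of]⟩

/-- The left ideal of relations of the genus-1 Steinberg module. -/
noncomputable def steinbergRelations :
    Submodule (MonoidAlgebra ℤ SL2Z) (MonoidAlgebra ℤ SL2Z) :=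
  Submodule.span (MonoidAlgebra ℤ SL2Z)
    {MonoidAlgebra.of ℤ SL2Z slA - MonoidAlgebra.of ℤ SL2Z slB + 1,
     1 + MonoidAlgebra.of ℤ SL2Z slC}

open scoped Matrix

/-- Reduction mod 2, as a monoid hom into 2×2 matrices over `ZMod 2`. -/
noncomputable def rho : SL2Z →* Matrix (Fin 2) (Fin 2) (ZMod 2) where
  toFun g := ((Matrix.SpecialLinearGroup.map (Int.castRingHom (ZMod 2)) g :
      Matrix.SpecialLinearGroup (Fin 2) (ZMod 2)) : Matrix (Fin 2) (Fin 2) (ZMod 2))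
  map_one' := by simp
  map_mul' := by intros; simp

/-- The induced algebra map on the group ring. -/
noncomputable def Phi : MonoidAlgebra ℤ SL2Z →ₐ[ℤ] Matrix (Fin 2) (Fin 2) (ZMod 2) :=
  MonoidAlgebra.lift ℤ _ SL2Z rho

lemma phi_relA :
    (Phi (MonoidAlgebra.of ℤ SL2Z slA - MonoidAlgebra.of ℤ SL2Z slB + 1)) *ᵥ ![1, 1] = 0 := by
  simp only [map_add, map_sub, map_one, Phi, MonoidAlgebra.lift_of]
  funext i
  fin_cases i <;>
    simp [rho, slA, slB, Matrix.mulVec, dotProduct, Matrix.SpecialLinearGroup.map,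
      Fin.sum_univ_two] <;> decide

lemma phi_relC :
    (Phi (1 + MonoidAlgebra.of ℤ SL2Z slC)) *ᵥ ![1, 1] = 0 := by
  simp only [map_add, map_one, Phi, MonoidAlgebra.lift_of]
  funext i
  fin_cases i <;>
    simp [rho, slC, Matrix.mulVec, dotProduct, Matrix.SpecialLinearGroup.map,
      Fin.sum_univ_two] <;> decide

lemma one_not_mem : (1 : MonoidAlgebra ℤ SL2Z) ∉ steinbergRelations := by
  intro h
  rw [steinbergRelations, Submodule.mem_span_pair] at h
  obtain ⟨r, s, hrs⟩ := h
  have h2 : (Phi r * Phi (MonoidAlgebra.of ℤ SL2Z slA - MonoidAlgebra.of ℤ SL2Z slB + 1)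
      + Phi s * Phi (1 + MonoidAlgebra.of ℤ SL2Z slC)) *ᵥ ![1, 1]
      = (1 : Matrix (Fin 2) (Fin 2) (ZMod 2)) *ᵥ ![1, 1] := by
    simp only [smul_eq_mul] at hrs
    rw [← map_mul, ← map_mul, ← map_add, hrs, map_one]
  rw [Matrix.add_mulVec, ← Matrix.mulVec_mulVec, ← Matrix.mulVec_mulVec, phi_relA, phi_relC,
    Matrix.mulVec_zero, Matrix.mulVec_zero, add_zero, Matrix.one_mulVec] at h2
  have := congrFun h2 0
  simp at this

theorem genus_one_steinberg_nonzero_cyclic :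
    Nontrivial (MonoidAlgebra ℤ SL2Z ⧸ steinbergRelations) ∧
    Submodule.span (MonoidAlgebra ℤ SL2Z)
      {(Submodule.Quotient.mk (1 : MonoidAlgebra ℤ SL2Z) :
        MonoidAlgebra ℤ SL2Z ⧸ steinbergRelations)} = ⊤ := by
  constructor
  · refine ⟨Submodule.Quotient.mk 1, 0, fun h => one_not_mem ?_⟩
    exact (Submodule.Quotient.mk_eq_zero _).mp h
  · rw [eq_top_iff]
    rintro x -
    obtain ⟨y, rfl⟩ := Submodule.Quotient.mk_surjective _ x
    rw [Submodule.mem_span_singleton]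
    exact ⟨y, by rw [← Submodule.Quotient.mk_smul, smul_eq_mul, mul_one]⟩
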